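/- arXiv:1202.6282 — 2 statements merged into one kernel-verified Lean document; each statement's English description precedes it below -/
import Mathlib

section
/- Under the same hypotheses, ∂_x ω(ξ; x, t) = −(1 / a(x,t)) · exp( ∫_ξ^x (∂_τ a / a²)(η, ω(η; x, t)) dη ); in particular ∂_x ω(ξ; x, t) = −(1/a(x,t)) · ∂_t ω(ξ; x, t). -/
open Set intervalIntegral
open MeasureTheory
open scoped Interval


/-- FTC on `[0,1]` for within-derivatives. -/
lemma my_ftc_aux {u F : ℝ → ℝ}
    (hu : ∀ s ∈ Icc (0:ℝ) 1, HasDerivWithinAt u (F s) (Icc 0 1) s)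
    (hF : ContinuousOn F (Icc 0 1)) :
    ∀ p ∈ Icc (0:ℝ) 1, ∀ q ∈ Icc (0:ℝ) 1, u q - u p = ∫ s in p..q, F s := by
  have key : ∀ p q : ℝ, p ∈ Icc (0:ℝ) 1 → q ∈ Icc (0:ℝ) 1 → p ≤ q →
      u q - u p = ∫ s in p..q, F s := by
    intro p q hp hq hpq
    have hsub : Icc p q ⊆ Icc (0:ℝ) 1 := Icc_subset_Icc hp.1 hq.2
    have hcont : ContinuousOn u (Icc (0:ℝ) 1) := fun s hs => (hu s hs).continuousWithinAt
    refine (intervalIntegral.integral_eq_sub_of_hasDeriv_right_of_le hpq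
      (hcont.mono hsub) ?_ ?_).symm
    · intro s hs
      have hsI : s ∈ Icc (0:ℝ) 1 := ⟨le_trans hp.1 hs.1.le, le_trans hs.2.le hq.2⟩
      exact ((hu s hsI).hasDerivAt (Icc_mem_nhds (lt_of_le_of_lt hp.1 hs.1)
        (lt_of_lt_of_le hs.2 hq.2))).hasDerivWithinAt
    · exact (hF.mono ((uIcc_of_le hpq).symm ▸ hsub)).intervalIntegrable
  intro p hp q hq
  rcases le_total p q with h | h
  · exact key p q hp hq h
  · have := key q p hq hp h
    rw [intervalIntegral.integral_symm]
    linarith [this]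

/-- Two-sided Grönwall estimate on `[0,1]`, anchored at `x`. -/
lemma my_gronwall_aux {v : ℝ → ℝ → ℝ} {J : Set ℝ} {K : NNReal}
    (hv : ∀ s : ℝ, LipschitzOnWith K (v s) J)
    {u w : ℝ → ℝ}
    (hu : ∀ s ∈ Icc (0:ℝ) 1, HasDerivWithinAt u (v s (u s)) (Icc 0 1) s)
    (hw : ∀ s ∈ Icc (0:ℝ) 1, HasDerivWithinAt w (v s (w s)) (Icc 0 1) s)
    (huJ : ∀ s ∈ Icc (0:ℝ) 1, u s ∈ J) (hwJ : ∀ s ∈ Icc (0:ℝ) 1, w s ∈ J)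
    {x : ℝ} (hx : x ∈ Icc (0:ℝ) 1) :
    ∀ s ∈ Icc (0:ℝ) 1, |u s - w s| ≤ |u x - w x| * Real.exp K := by
  have hcu : ContinuousOn u (Icc (0:ℝ) 1) := fun s hs => (hu s hs).continuousWithinAt
  have hcw : ContinuousOn w (Icc (0:ℝ) 1) := fun s hs => (hw s hs).continuousWithinAt
  -- forward estimate on [x, 1]
  have fwd : ∀ s ∈ Icc x 1, dist (u s) (w s) ≤ dist (u x) (w x) * Real.exp (K * (s - x)) := by
    have hderiv : ∀ (z : ℝ → ℝ), (∀ s ∈ Icc (0:ℝ) 1, HasDerivWithinAt z (v s (z s)) (Icc 0 1) s) →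
        ∀ s ∈ Ico x 1, HasDerivWithinAt z (v s (z s)) (Ici s) s := by
      intro z hz s hs
      have hsI : s ∈ Icc (0:ℝ) 1 := ⟨hx.1.trans hs.1, hs.2.le⟩
      have h1 : HasDerivWithinAt z (v s (z s)) (Icc s 1) s :=
        (hz s hsI).mono (Icc_subset_Icc hsI.1 le_rfl)
      exact h1.mono_of_mem_nhdsWithin
        (nhdsWithin_Icc_eq_nhdsGE hs.2 ▸ self_mem_nhdsWithin)
    exact dist_le_of_trajectories_ODE_of_mem (s := fun _ => J) (fun s _ => hv s)
      (hcu.mono (Icc_subset_Icc hx.1 le_rfl)) (hderiv u hu)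
      (fun s hs => huJ s ⟨hx.1.trans hs.1, hs.2.le⟩)
      (hcw.mono (Icc_subset_Icc hx.1 le_rfl)) (hderiv w hw)
      (fun s hs => hwJ s ⟨hx.1.trans hs.1, hs.2.le⟩) le_rfl
  -- backward estimate via reflection
  have bwd : ∀ s ∈ Icc (0:ℝ) x, dist (u s) (w s) ≤
      dist (u x) (w x) * Real.exp (K * (x - s)) := by
    have hmaps : MapsTo (fun σ : ℝ => 2 * x - σ) (Icc x (2 * x)) (Icc (0:ℝ) 1) := by
      intro y hy
      simp only [mem_Icc] at hy
      have hx1 := hx.1; have hx2 := hx.2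
      show (2 * x - y) ∈ Icc (0:ℝ) 1
      rw [mem_Icc]
      constructor <;> linarith
    have hvr : ∀ σ : ℝ, LipschitzOnWith K (fun y => -(v (2 * x - σ) y)) J := by
      intro σ p hp q hq
      simpa [edist_neg_neg] using hv (2 * x - σ) hp hq
    have hderiv : ∀ (z : ℝ → ℝ), (∀ s ∈ Icc (0:ℝ) 1, HasDerivWithinAt z (v s (z s)) (Icc 0 1) s) →
        ∀ σ ∈ Ico x (2 * x), HasDerivWithinAt (fun σ' => z (2 * x - σ'))
          (-(v (2 * x - σ) (z (2 * x - σ)))) (Ici σ) σ := by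
      intro z hz σ hσ
      have hσ' : (2 * x - σ) ∈ Icc (0:ℝ) 1 := hmaps ⟨hσ.1, hσ.2.le⟩
      have hinner : HasDerivWithinAt (fun σ' : ℝ => 2 * x - σ') (-1) (Icc σ (2 * x)) σ :=
        ((hasDerivAt_id σ).const_sub (2 * x)).hasDerivWithinAt
      have hmaps' : MapsTo (fun σ' : ℝ => 2 * x - σ') (Icc σ (2 * x)) (Icc (0:ℝ) 1) := by
        intro y hy
        simp only [mem_Icc] at hy ⊢
        constructor
        · linarith
        · have h1 : 2 * x - y ≤ 2 * x - σ := by linarith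
          exact h1.trans hσ'.2
      have hcomp := (hz (2 * x - σ) hσ').comp σ hinner hmaps'
      have : HasDerivWithinAt (fun σ' => z (2 * x - σ'))
          (-(v (2 * x - σ) (z (2 * x - σ)))) (Icc σ (2 * x)) σ := by
        simpa [Function.comp_def, mul_comm] using hcomp
      exact this.mono_of_mem_nhdsWithin
        (nhdsWithin_Icc_eq_nhdsGE hσ.2 ▸ self_mem_nhdsWithin)
    have main := dist_le_of_trajectories_ODE_of_mem (s := fun _ => J)
      (v := fun σ y => -(v (2 * x - σ) y)) (fun σ _ => hvr σ)
      ((hcu.comp ((continuous_const.sub continuous_id).continuousOn) hmaps))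
      (hderiv u hu) (fun σ hσ => huJ _ (hmaps ⟨hσ.1, hσ.2.le⟩))
      ((hcw.comp ((continuous_const.sub continuous_id).continuousOn) hmaps))
      (hderiv w hw) (fun σ hσ => hwJ _ (hmaps ⟨hσ.1, hσ.2.le⟩)) le_rfl
    intro s hs
    have hσ : (2 * x - s) ∈ Icc x (2 * x) := by
      simp only [mem_Icc] at hs ⊢; constructor <;> linarith
    have hfin := main (2 * x - s) hσ
    simp only [Function.comp, id_eq, Pi.sub_apply] at hfin
    have e1 : 2 * x - (2 * x - s) = s := by ring
    have e2 : 2 * x - x = x := by ring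
    have e3 : 2 * x - s - x = x - s := by ring
    rw [e1, e2, e3] at hfin
    exact hfin
  intro s hs
  have hK1 : ∀ d : ℝ, d ≤ 1 → Real.exp (K * d) ≤ Real.exp K := by
    intro d hd
    apply Real.exp_le_exp.2
    calc (K : ℝ) * d ≤ K * 1 := by
          apply mul_le_mul_of_nonneg_left hd K.coe_nonneg
      _ = K := mul_one _
  rcases le_total s x with h | h
  · have := bwd s ⟨hs.1, h⟩
    have h2 : dist (u x) (w x) * Real.exp (K * (x - s)) ≤
        dist (u x) (w x) * Real.exp K :=
      mul_le_mul_of_nonneg_left (hK1 _ (by simp only [mem_Icc] at hs hx; linarith)) dist_nonneg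
    simpa [Real.dist_eq] using this.trans h2
  · have := fwd s ⟨h, hs.2⟩
    have h2 : dist (u x) (w x) * Real.exp (K * (s - x)) ≤
        dist (u x) (w x) * Real.exp K :=
      mul_le_mul_of_nonneg_left (hK1 _ (by simp only [mem_Icc] at hs hx; linarith)) dist_nonneg
    simpa [Real.dist_eq] using this.trans h2

/-- partial derivative of `a` in the second variable, as a value of `fderiv`. -/
lemma my_hasDerivAt_snd {a : ℝ → ℝ → ℝ} (ha : ContDiff ℝ 1 (Function.uncurry a)) (η τ : ℝ) :
    HasDerivAt (fun τ' => a η τ') (fderiv ℝ (Function.uncurry a) (η, τ) (0, 1)) τ := by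
  have h1 : HasFDerivAt (Function.uncurry a) (fderiv ℝ (Function.uncurry a) (η, τ)) (η, τ) :=
    (ha.differentiable one_ne_zero (η, τ)).hasFDerivAt
  have h2 : HasDerivAt (fun τ' : ℝ => ((η : ℝ), τ')) ((0 : ℝ), (1 : ℝ)) τ :=
    HasDerivAt.prodMk (hasDerivAt_const τ η) (hasDerivAt_id τ)
  exact h1.comp_hasDerivAt τ h2

lemma my_cont_dA {a : ℝ → ℝ → ℝ} (ha : ContDiff ℝ 1 (Function.uncurry a)) :
    Continuous (fun p : ℝ × ℝ => deriv (fun τ' => a p.1 τ') p.2) := by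
  have heq : (fun p : ℝ × ℝ => deriv (fun τ' => a p.1 τ') p.2)
      = fun p : ℝ × ℝ => fderiv ℝ (Function.uncurry a) p (0, 1) := by
    funext p
    exact (my_hasDerivAt_snd ha p.1 p.2).deriv
  rw [heq]
  exact (ha.continuous_fderiv one_ne_zero).clm_apply continuous_const


/-- For the characteristic flow `ω(ξ; x, t)` of `∂_ξ ω = 1/a(ξ, ω)`, `ω(x; x, t) = t`,
where `a` is `C¹` with `inf |a| > 0`, one has
`∂_x ω(ξ; x, t) = −(1/a(x,t)) · exp ( ∫_ξ^x (∂_τ a / a²)(η, ω(η; x, t)) dη )`;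
in particular `∂_x ω(ξ; x, t) = −(1/a(x,t)) · ∂_t ω(ξ; x, t)`. -/
theorem characteristic_flow_deriv_x
    (a : ℝ → ℝ → ℝ) (ha : ContDiff ℝ 1 (Function.uncurry a))
    (c : ℝ) (hc : 0 < c) (hbound : ∀ ξ τ : ℝ, c ≤ |a ξ τ|)
    (ω : ℝ → ℝ → ℝ → ℝ)
    (hinit : ∀ x t : ℝ, ω x x t = t)
    (hode : ∀ x ∈ Icc (0:ℝ) 1, ∀ t : ℝ, ∀ ξ ∈ Icc (0:ℝ) 1,
      HasDerivWithinAt (fun s => ω s x t) (1 / a ξ (ω ξ x t)) (Icc 0 1) ξ)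
    (ξ x : ℝ) (hξ : ξ ∈ Icc (0:ℝ) 1) (hx : x ∈ Icc (0:ℝ) 1) (t : ℝ) :
    HasDerivWithinAt (fun y => ω ξ y t)
      (-(1 / a x t) * Real.exp (∫ η in ξ..x,
        deriv (fun τ => a η τ) (ω η x t) / (a η (ω η x t)) ^ 2)) (Icc 0 1) x ∧
    ∀ dt : ℝ, HasDerivAt (fun τ => ω ξ x τ) dt t →
      HasDerivWithinAt (fun y => ω ξ y t) (-(1 / a x t) * dt) (Icc 0 1) x := by
  have ha' : Continuous (Function.uncurry a) := ha.continuous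
  have haC : Continuous (fun p : ℝ × ℝ => a p.1 p.2) := ha'
  have hane : ∀ p q : ℝ, a p q ≠ 0 := by
    intro p q h
    have := hbound p q
    rw [h, abs_zero] at this; linarith
  have hcpos : (0:ℝ) < c⁻¹ := inv_pos.2 hc
  -- the partial derivative of `(a s τ)⁻¹` in `τ`
  set D : ℝ × ℝ → ℝ := fun p => -(deriv (fun τ' => a p.1 τ') p.2) / (a p.1 p.2) ^ 2 with hD_def
  have hD_cont : Continuous D :=
    ((my_cont_dA ha).neg).div (haC.pow 2) (fun p => pow_ne_zero _ (hane p.1 p.2))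
  have hf_deriv : ∀ η τ : ℝ, HasDerivAt (fun τ' => (a η τ')⁻¹) (D (η, τ)) τ := by
    intro η τ
    exact ((my_hasDerivAt_snd ha η τ).differentiableAt.hasDerivAt).inv (hane η τ)
  have hfb : ∀ η τ : ℝ, |(a η τ)⁻¹| ≤ c⁻¹ := by
    intro η τ
    rw [abs_inv]
    exact inv_anti₀ hc (hbound η τ)
  have habs1 : ∀ p q : ℝ, p ∈ Icc (0:ℝ) 1 → q ∈ Icc (0:ℝ) 1 → |p - q| ≤ 1 := by
    intro p q hp hq
    rw [abs_le]
    constructor <;> [(linarith [hp.1, hq.2]); (linarith [hp.2, hq.1])]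
  have hsubI : ∀ p q : ℝ, p ∈ Icc (0:ℝ) 1 → q ∈ Icc (0:ℝ) 1 → uIcc p q ⊆ Icc (0:ℝ) 1 := by
    intro p q hp hq
    rw [uIcc]
    exact Icc_subset_Icc (le_inf hp.1 hq.1) (sup_le hp.2 hq.2)
  have hsubI' : ∀ p q : ℝ, p ∈ Icc (0:ℝ) 1 → q ∈ Icc (0:ℝ) 1 → Ι p q ⊆ Icc (0:ℝ) 1 :=
    fun p q hp hq => (uIoc_subset_uIcc).trans (hsubI p q hp hq)
  set lo : ℝ := t - (c⁻¹ + 1) with hlo_def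
  set hi : ℝ := t + (c⁻¹ + 1) with hhi_def
  have hmemJ : ∀ z : ℝ, |z - t| ≤ c⁻¹ + 1 → z ∈ Icc lo hi := by
    intro z hz
    rw [abs_le] at hz
    exact ⟨by rw [hlo_def]; linarith [hz.1], by rw [hhi_def]; linarith [hz.2]⟩
  have hKc : IsCompact ((Icc (0:ℝ) 1) ×ˢ (Icc lo hi)) := isCompact_Icc.prod isCompact_Icc
  have hKne : ((Icc (0:ℝ) 1) ×ˢ (Icc lo hi)).Nonempty :=
    ⟨(0, t), ⟨⟨le_rfl, zero_le_one⟩, hmemJ t (by simp; positivity)⟩⟩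
  obtain ⟨p₀, hp₀, hp₀max⟩ := hKc.exists_isMaxOn hKne (continuous_abs.comp hD_cont).continuousOn
  set L : ℝ := |D p₀| with hL_def
  have hL0 : (0:ℝ) ≤ L := abs_nonneg _
  have hLb : ∀ p ∈ (Icc (0:ℝ) 1) ×ˢ (Icc lo hi), |D p| ≤ L := fun p hp => hp₀max hp
  have hexpL : (0:ℝ) < Real.exp L := Real.exp_pos L
  -- clamp and Lipschitz field
  set clamp : ℝ → ℝ := fun s => max 0 (min 1 s) with hclamp_def
  have hclamp_mem : ∀ s : ℝ, clamp s ∈ Icc (0:ℝ) 1 := fun s =>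
    ⟨le_max_left _ _, max_le zero_le_one (min_le_left _ _)⟩
  have hclamp_eq : ∀ s ∈ Icc (0:ℝ) 1, clamp s = s := by
    intro s hs
    rw [hclamp_def]
    simp only [min_eq_right hs.2, max_eq_right hs.1]
  have hLip : ∀ s : ℝ,
      LipschitzOnWith (Real.toNNReal L) (fun τ => (a (clamp s) τ)⁻¹) (Icc lo hi) := by
    intro s
    apply (convex_Icc lo hi).lipschitzOnWith_of_nnnorm_hasDerivWithin_le
      (f' := fun τ => D (clamp s, τ))
      (fun τ _ => (hf_deriv (clamp s) τ).hasDerivWithinAt)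
    intro τ hτ
    rw [← NNReal.coe_le_coe, coe_nnnorm, Real.coe_toNNReal _ hL0, Real.norm_eq_abs]
    exact hLb (clamp s, τ) ⟨hclamp_mem s, hτ⟩
  -- basic facts about the characteristic curves
  have hode' : ∀ y ∈ Icc (0:ℝ) 1, ∀ t' : ℝ, ∀ s ∈ Icc (0:ℝ) 1,
      HasDerivWithinAt (fun s' => ω s' y t') ((a s (ω s y t'))⁻¹) (Icc 0 1) s := by
    intro y hy t' s hs
    simpa [one_div] using hode y hy t' s hs
  have hcont' : ∀ y ∈ Icc (0:ℝ) 1, ∀ t' : ℝ, ContinuousOn (fun s => ω s y t') (Icc 0 1) :=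
    fun y hy t' s hs => (hode' y hy t' s hs).continuousWithinAt
  have hainv_cont : ∀ u : ℝ → ℝ, ContinuousOn u (Icc (0:ℝ) 1) →
      ContinuousOn (fun s => (a s (u s))⁻¹) (Icc (0:ℝ) 1) := by
    intro u hu
    exact ((haC.comp_continuousOn (continuousOn_id.prodMk hu))).inv₀
      (fun s _ => hane s (u s))
  have hftc : ∀ y ∈ Icc (0:ℝ) 1, ∀ t' : ℝ, ∀ p ∈ Icc (0:ℝ) 1, ∀ q ∈ Icc (0:ℝ) 1,
      ω q y t' - ω p y t' = ∫ s in p..q, (a s (ω s y t'))⁻¹ :=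
    fun y hy t' => my_ftc_aux (hode' y hy t') (hainv_cont _ (hcont' y hy t'))
  have hnear : ∀ y ∈ Icc (0:ℝ) 1, ∀ t' : ℝ, ∀ s ∈ Icc (0:ℝ) 1,
      |ω s y t' - t'| ≤ c⁻¹ * |s - y| := by
    intro y hy t' s hs
    have h1 := hftc y hy t' y hy s hs
    rw [hinit y t'] at h1
    rw [h1]
    have h2 := intervalIntegral.norm_integral_le_of_norm_le_const
      (C := c⁻¹) (f := fun s' => (a s' (ω s' y t'))⁻¹) (a := y) (b := s)
      (fun η _ => by simpa [Real.norm_eq_abs, abs_inv] using hfb η (ω η y t'))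
    simpa [Real.norm_eq_abs, abs_sub_comm] using h2
  have hnear1 : ∀ y ∈ Icc (0:ℝ) 1, ∀ t' : ℝ, ∀ s ∈ Icc (0:ℝ) 1,
      |ω s y t' - t'| ≤ c⁻¹ := by
    intro y hy t' s hs
    calc |ω s y t' - t'| ≤ c⁻¹ * |s - y| := hnear y hy t' s hs
      _ ≤ c⁻¹ * 1 := mul_le_mul_of_nonneg_left (habs1 s y hs hy) hcpos.le
      _ = c⁻¹ := mul_one _
  -- the base solution
  set v : ℝ → ℝ := fun s => ω s x t with hv_def
  have hvx : v x = t := hinit x t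
  have hode_v : ∀ s ∈ Icc (0:ℝ) 1, HasDerivWithinAt v ((a s (v s))⁻¹) (Icc 0 1) s :=
    hode' x hx t
  have hv_cont : ContinuousOn v (Icc 0 1) := hcont' x hx t
  have hvJ : ∀ s ∈ Icc (0:ℝ) 1, v s ∈ Icc lo hi := by
    intro s hs
    refine hmemJ _ ((hnear1 x hx t s hs).trans ?_)
    linarith
  -- the integrating factor
  set g : ℝ → ℝ := fun s => D (s, v s) with hg_def
  have hg_cont : ContinuousOn g (Icc (0:ℝ) 1) :=
    hD_cont.comp_continuousOn (continuousOn_id.prodMk hv_cont)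
  have hg_int : ∀ p ∈ Icc (0:ℝ) 1, ∀ q ∈ Icc (0:ℝ) 1, IntervalIntegrable g volume p q :=
    fun p hp q hq => (hg_cont.mono (hsubI p q hp hq)).intervalIntegrable
  set G : ℝ → ℝ := fun s => ∫ η in x..s, g η with hG_def
  have hG_deriv : ∀ s ∈ Icc (0:ℝ) 1, HasDerivWithinAt G (g s) (Icc 0 1) s := by
    intro s hs
    haveI : Fact (s ∈ Icc (0:ℝ) 1) := ⟨hs⟩
    exact intervalIntegral.integral_hasDerivWithinAt_right (hg_int x hx s hs)
      ⟨Icc 0 1, self_mem_nhdsWithin, hg_cont.aestronglyMeasurable measurableSet_Icc⟩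
      (hg_cont s hs)
  have hG_cont : ContinuousOn G (Icc (0:ℝ) 1) :=
    fun s hs => (hG_deriv s hs).continuousWithinAt
  have hGb : ∀ s ∈ Icc (0:ℝ) 1, |G s| ≤ L := by
    intro s hs
    have h2 := intervalIntegral.norm_integral_le_of_norm_le_const
      (C := L) (f := g) (a := x) (b := s) (fun η hη => by
        rw [Real.norm_eq_abs]
        exact hLb (η, v η) ⟨hsubI' x s hx hs hη, hvJ η (hsubI' x s hx hs hη)⟩)
    calc |G s| ≤ L * |s - x| := by simpa [Real.norm_eq_abs, hG_def] using h2
      _ ≤ L * 1 := mul_le_mul_of_nonneg_left (habs1 s x hs hx) hL0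
      _ = L := mul_one _
  have hexpGb : ∀ s ∈ Icc (0:ℝ) 1, Real.exp (G s) ≤ Real.exp L :=
    fun s hs => Real.exp_le_exp.2 ((le_abs_self _).trans (hGb s hs))
  have hexpGb' : ∀ s ∈ Icc (0:ℝ) 1, Real.exp (-G s) ≤ Real.exp L :=
    fun s hs => Real.exp_le_exp.2 ((neg_le_abs _).trans (hGb s hs))
  -- KEY quantitative estimate
  have keyA : ∀ ε > (0:ℝ), ∃ δ > (0:ℝ), ∀ u : ℝ → ℝ,
      (∀ s ∈ Icc (0:ℝ) 1, HasDerivWithinAt u ((a s (u s))⁻¹) (Icc 0 1) s) →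
      (∀ s ∈ Icc (0:ℝ) 1, u s ∈ Icc lo hi) →
      |u x - t| ≤ δ →
      |u ξ - v ξ - (u x - t) * Real.exp (G ξ)| ≤ ε * |u x - t| := by
    intro ε hε
    set ε₀ : ℝ := ε / (Real.exp L) ^ 3 with hε₀_def
    have hε₀ : 0 < ε₀ := div_pos hε (pow_pos hexpL 3)
    obtain ⟨δ', hδ', hδ'uc⟩ := (Metric.uniformContinuousOn_iff_le.1
      (hKc.uniformContinuousOn_of_continuous hD_cont.continuousOn)) ε₀ hε₀
    refine ⟨δ' / Real.exp L, div_pos hδ' hexpL, ?_⟩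
    intro u hode_u huJ hanchor
    have hu_cont : ContinuousOn u (Icc (0:ℝ) 1) :=
      fun s hs => (hode_u s hs).continuousWithinAt
    -- Gronwall estimate
    have hGr : ∀ s ∈ Icc (0:ℝ) 1, |u s - v s| ≤ |u x - t| * Real.exp L := by
      have hh1 : ∀ s ∈ Icc (0:ℝ) 1,
          HasDerivWithinAt u ((a (clamp s) (u s))⁻¹) (Icc 0 1) s := by
        intro s hs; rw [hclamp_eq s hs]; exact hode_u s hs
      have hh2 : ∀ s ∈ Icc (0:ℝ) 1,
          HasDerivWithinAt v ((a (clamp s) (v s))⁻¹) (Icc 0 1) s := by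
        intro s hs; rw [hclamp_eq s hs]; exact hode_v s hs
      have h3 := my_gronwall_aux hLip hh1 hh2 huJ hvJ hx
      intro s hs
      have h4 := h3 s hs
      rwa [hvx, Real.coe_toNNReal _ hL0] at h4
    have hsmall : ∀ s ∈ Icc (0:ℝ) 1, |u s - v s| ≤ δ' := by
      intro s hs
      calc |u s - v s| ≤ |u x - t| * Real.exp L := hGr s hs
        _ ≤ (δ' / Real.exp L) * Real.exp L :=
            mul_le_mul_of_nonneg_right hanchor hexpL.le
        _ = δ' := div_mul_cancel₀ _ hexpL.ne'
    -- the linearization error estimate via MVT and uniform continuity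
    have hr : ∀ s ∈ Icc (0:ℝ) 1,
        |(a s (u s))⁻¹ - (a s (v s))⁻¹ - g s * (u s - v s)| ≤ ε₀ * |u s - v s| := by
      intro s hs
      rcases eq_or_ne (u s) (v s) with he | hne
      · simp [he]
      · have hmvt : ∃ θ : ℝ, θ ∈ Icc lo hi ∧ |θ - v s| ≤ |u s - v s| ∧
            (a s (u s))⁻¹ - (a s (v s))⁻¹ = D (s, θ) * (u s - v s) := by
          rcases hne.lt_or_gt with hlt | hlt
          · obtain ⟨θ, hθ, hslope⟩ := exists_hasDerivAt_eq_slope (fun τ => (a s τ)⁻¹)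
              (fun τ => D (s, τ)) hlt
              (fun τ _ => ((hf_deriv s τ).continuousAt).continuousWithinAt)
              (fun τ _ => hf_deriv s τ)
            have habs : |u s - v s| = v s - u s := by
              rw [abs_sub_comm]; exact abs_of_nonneg (by linarith)
            refine ⟨θ, ⟨(huJ s hs).1.trans hθ.1.le, hθ.2.le.trans (hvJ s hs).2⟩, ?_, ?_⟩
            · rw [habs, abs_le]; constructor <;> linarith [hθ.1, hθ.2]
            · rw [eq_div_iff (sub_ne_zero.2 hlt.ne')] at hslope
              linear_combination hslope
          · obtain ⟨θ, hθ, hslope⟩ := exists_hasDerivAt_eq_slope (fun τ => (a s τ)⁻¹)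
              (fun τ => D (s, τ)) hlt
              (fun τ _ => ((hf_deriv s τ).continuousAt).continuousWithinAt)
              (fun τ _ => hf_deriv s τ)
            have habs : |u s - v s| = u s - v s := abs_of_nonneg (by linarith)
            refine ⟨θ, ⟨(hvJ s hs).1.trans hθ.1.le, hθ.2.le.trans (huJ s hs).2⟩, ?_, ?_⟩
            · rw [habs, abs_le]; constructor <;> linarith [hθ.1, hθ.2]
            · rw [eq_div_iff (sub_ne_zero.2 hlt.ne')] at hslope
              linear_combination -hslope
        obtain ⟨θ, hθJ, hθcl, heq⟩ := hmvt
        rw [heq]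
        have hgs : g s = D (s, v s) := rfl
        rw [hgs, ← sub_mul, abs_mul]
        refine mul_le_mul_of_nonneg_right ?_ (abs_nonneg _)
        have hdist := hδ'uc (s, θ) ⟨hs, hθJ⟩ (s, v s) ⟨hs, hvJ s hs⟩ (by
          rw [Prod.dist_eq]
          apply max_le
          · simp [hδ'.le]
          · rw [Real.dist_eq]
            exact hθcl.trans (hsmall s hs))
        simpa [Real.dist_eq] using hdist
    -- integrating factor
    set Φ : ℝ → ℝ := fun s => (u s - v s) * Real.exp (-G s) with hΦ_def
    set Φ' : ℝ → ℝ := fun s =>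
      ((a s (u s))⁻¹ - (a s (v s))⁻¹ - g s * (u s - v s)) * Real.exp (-G s) with hΦ'_def
    have hΦderiv : ∀ s ∈ Icc (0:ℝ) 1, HasDerivWithinAt Φ (Φ' s) (Icc 0 1) s := by
      intro s hs
      have h1 := ((hode_u s hs).sub (hode_v s hs)).mul (((hG_deriv s hs).neg).exp)
      convert h1 using 1
      · rfl
      · rfl
      · rfl
      rw [hΦ'_def]
      simp only [Pi.neg_apply, Pi.sub_apply]
      ring
    have hΦ'cont : ContinuousOn Φ' (Icc (0:ℝ) 1) := by
      apply ContinuousOn.mul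
      · exact (((hainv_cont u hu_cont).sub (hainv_cont v hv_cont)).sub
          (hg_cont.mul (hu_cont.sub hv_cont)))
      · exact Real.continuous_exp.comp_continuousOn hG_cont.neg
    have hftcΦ := my_ftc_aux hΦderiv hΦ'cont x hx ξ hξ
    have hΦ'b : ∀ η ∈ Ι x ξ, ‖Φ' η‖ ≤ ε₀ * (|u x - t| * Real.exp L) * Real.exp L := by
      intro η hη
      have hηI : η ∈ Icc (0:ℝ) 1 := hsubI' x ξ hx hξ hη
      rw [Real.norm_eq_abs, hΦ'_def]
      rw [abs_mul]
      have h1 : |(a η (u η))⁻¹ - (a η (v η))⁻¹ - g η * (u η - v η)| ≤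
          ε₀ * (|u x - t| * Real.exp L) := by
        calc |(a η (u η))⁻¹ - (a η (v η))⁻¹ - g η * (u η - v η)|
            ≤ ε₀ * |u η - v η| := hr η hηI
          _ ≤ ε₀ * (|u x - t| * Real.exp L) :=
              mul_le_mul_of_nonneg_left (hGr η hηI) hε₀.le
      have h2 : |Real.exp (-G η)| ≤ Real.exp L := by
        rw [abs_of_pos (Real.exp_pos _)]
        exact hexpGb' η hηI
      exact mul_le_mul h1 h2 (abs_nonneg _) (by positivity)
    have hΦbound : |Φ ξ - Φ x| ≤ ε₀ * (|u x - t| * Real.exp L) * Real.exp L := by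
      rw [hftcΦ]
      have h3 := intervalIntegral.norm_integral_le_of_norm_le_const hΦ'b
      rw [Real.norm_eq_abs] at h3
      calc |∫ s in x..ξ, Φ' s| ≤ ε₀ * (|u x - t| * Real.exp L) * Real.exp L * |ξ - x| := h3
        _ ≤ ε₀ * (|u x - t| * Real.exp L) * Real.exp L * 1 := by
            apply mul_le_mul_of_nonneg_left (habs1 ξ x hξ hx)
            positivity
        _ = ε₀ * (|u x - t| * Real.exp L) * Real.exp L := mul_one _
    have hGx : G x = 0 := intervalIntegral.integral_same
    have hΦx : Φ x = u x - t := by rw [hΦ_def]; simp [hGx, hvx]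
    have hkey : u ξ - v ξ - (u x - t) * Real.exp (G ξ) = (Φ ξ - Φ x) * Real.exp (G ξ) := by
      rw [hΦx, hΦ_def]
      have h2 : Real.exp (-G ξ) * Real.exp (G ξ) = 1 := by
        rw [← Real.exp_add]; simp
      linear_combination (v ξ - u ξ) * h2
    rw [hkey, abs_mul, abs_of_pos (Real.exp_pos _)]
    calc |Φ ξ - Φ x| * Real.exp (G ξ)
        ≤ (ε₀ * (|u x - t| * Real.exp L) * Real.exp L) * Real.exp L := by
          apply mul_le_mul hΦbound (hexpGb ξ hξ) (Real.exp_pos _).le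
          positivity
      _ = ε * |u x - t| := by
          rw [hε₀_def]
          field_simp
  -- derivative in t
  have hT : HasDerivAt (fun τ => ω ξ x τ) (Real.exp (G ξ)) t := by
    rw [hasDerivAt_iff_isLittleO, Asymptotics.isLittleO_iff]
    intro ε hε
    obtain ⟨δ, hδ, hkeyA⟩ := keyA ε hε
    rw [Metric.eventually_nhds_iff]
    refine ⟨min δ 1, lt_min hδ one_pos, ?_⟩
    intro t' ht'
    rw [Real.dist_eq] at ht'
    have ht'1 : |t' - t| ≤ 1 := le_of_lt (lt_of_lt_of_le ht' (min_le_right _ _))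
    have ht'δ : |t' - t| ≤ δ := le_of_lt (lt_of_lt_of_le ht' (min_le_left _ _))
    have hux : ω x x t' = t' := hinit x t'
    have huJ : ∀ s ∈ Icc (0:ℝ) 1, ω s x t' ∈ Icc lo hi := by
      intro s hs
      apply hmemJ
      calc |ω s x t' - t| ≤ |ω s x t' - t'| + |t' - t| := abs_sub_le _ _ _
        _ ≤ c⁻¹ + 1 := add_le_add (hnear1 x hx t' s hs) ht'1
    have h2 := hkeyA (fun s => ω s x t') (hode' x hx t') huJ
      (by show |ω x x t' - t| ≤ δ; rw [hux]; exact ht'δ)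
    beta_reduce at h2
    rw [hux] at h2
    have hgoal : ω ξ x t' - ω ξ x t - (t' - t) • Real.exp (G ξ)
        = ω ξ x t' - v ξ - (t' - t) * Real.exp (G ξ) := by
      rw [smul_eq_mul, hv_def]
    calc ‖ω ξ x t' - ω ξ x t - (t' - t) • Real.exp (G ξ)‖
        = |ω ξ x t' - v ξ - (t' - t) * Real.exp (G ξ)| := by rw [Real.norm_eq_abs, hgoal]
      _ ≤ ε * |t' - t| := h2
      _ = ε * ‖t' - t‖ := by rw [Real.norm_eq_abs]
  -- derivative in x
  have hfcont : Continuous (fun p : ℝ × ℝ => (a p.1 p.2)⁻¹) :=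
    haC.inv₀ (fun p => hane p.1 p.2)
  have hX : HasDerivWithinAt (fun y => ω ξ y t) (-(a x t)⁻¹ * Real.exp (G ξ)) (Icc 0 1) x := by
    rw [hasDerivWithinAt_iff_isLittleO, Asymptotics.isLittleO_iff]
    intro ε hε
    have hε2 : 0 < ε * c / 2 := by positivity
    obtain ⟨δ, hδ, hkeyA⟩ := keyA (ε * c / 2) hε2
    set ε₂ : ℝ := ε / (2 * Real.exp L) with hε₂_def
    have hε₂pos : 0 < ε₂ := by positivity
    obtain ⟨δ₂, hδ₂, hδ₂c⟩ := Metric.continuousAt_iff.1 (hfcont.continuousAt (x := (x, t))) ε₂ hε₂pos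
    rw [eventually_nhdsWithin_iff, Metric.eventually_nhds_iff]
    refine ⟨min (δ * c) (min (δ₂ / 2) (c * δ₂ / 2)), by positivity, ?_⟩
    intro y hyr hyI
    rw [Real.dist_eq] at hyr
    have hyr1 : |y - x| ≤ δ * c := le_of_lt (lt_of_lt_of_le hyr (min_le_left _ _))
    have hyr2 : |y - x| < δ₂ / 2 :=
      lt_of_lt_of_le hyr ((min_le_right _ _).trans (min_le_left _ _))
    have hyr3 : |y - x| < c * δ₂ / 2 :=
      lt_of_lt_of_le hyr ((min_le_right _ _).trans (min_le_right _ _))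
    have hanchor : |ω x y t - t| ≤ c⁻¹ * |y - x| := by
      have := hnear y hyI t x hx
      rwa [abs_sub_comm x y] at this
    have hanchorδ : |ω x y t - t| ≤ δ := by
      calc |ω x y t - t| ≤ c⁻¹ * |y - x| := hanchor
        _ ≤ c⁻¹ * (δ * c) := mul_le_mul_of_nonneg_left hyr1 hcpos.le
        _ = δ := by field_simp
    have huJ : ∀ s ∈ Icc (0:ℝ) 1, ω s y t ∈ Icc lo hi := by
      intro s hs
      apply hmemJ
      calc |ω s y t - t| ≤ c⁻¹ := hnear1 y hyI t s hs
        _ ≤ c⁻¹ + 1 := by linarith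
    have h2 := hkeyA (fun s => ω s y t) (hode' y hyI t) huJ hanchorδ
    -- second order estimate at the anchor point
    have hbetween : ∀ η ∈ Ι y x, |η - x| ≤ |y - x| ∧ |η - y| ≤ |y - x| := by
      intro η hη
      rcases le_total y x with h | h
      · rw [uIoc_of_le h] at hη
        have hyx : |y - x| = x - y := by
          rw [abs_sub_comm]; exact abs_of_nonneg (by linarith)
        constructor
        · rw [hyx, abs_le]; constructor <;> linarith [hη.1, hη.2]
        · rw [hyx, abs_le]; constructor <;> linarith [hη.1, hη.2]
      · rw [uIoc_of_ge h] at hη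
        have hyx : |y - x| = y - x := abs_of_nonneg (by linarith)
        constructor
        · rw [hyx, abs_le]; constructor <;> linarith [hη.1, hη.2]
        · rw [hyx, abs_le]; constructor <;> linarith [hη.1, hη.2]
    have hptwise : ∀ η ∈ Ι y x, ‖(a η (ω η y t))⁻¹ - (a x t)⁻¹‖ ≤ ε₂ := by
      intro η hη
      have hηI : η ∈ Icc (0:ℝ) 1 := hsubI' y x hyI hx hη
      have hd : dist (η, ω η y t) (x, t) < δ₂ := by
        rw [Prod.dist_eq]
        apply max_lt
        · rw [Real.dist_eq]
          exact lt_of_le_of_lt (hbetween η hη).1 (lt_of_lt_of_le hyr2 (by linarith))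
        · rw [Real.dist_eq]
          calc |ω η y t - t| ≤ c⁻¹ * |η - y| := hnear y hyI t η hηI
            _ ≤ c⁻¹ * |y - x| := mul_le_mul_of_nonneg_left (hbetween η hη).2 hcpos.le
            _ < c⁻¹ * (c * δ₂ / 2) := by
                apply (mul_lt_mul_iff_right₀ hcpos).2 hyr3
            _ = δ₂ / 2 := by field_simp
            _ < δ₂ := by linarith
      have := hδ₂c hd
      rw [Real.dist_eq] at this
      rw [Real.norm_eq_abs]
      exact this.le
    have hintF : IntervalIntegrable (fun s => (a s (ω s y t))⁻¹) volume y x :=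
      ((hainv_cont _ (hcont' y hyI t)).mono (hsubI y x hyI hx)).intervalIntegrable
    have hsec : |(ω x y t - t) - (x - y) * (a x t)⁻¹| ≤ ε₂ * |y - x| := by
      have h5 := hftc y hyI t y hyI x hx
      rw [hinit y t] at h5
      have h6 : (x - y) * (a x t)⁻¹ = ∫ _ in y..x, (a x t)⁻¹ := by
        rw [intervalIntegral.integral_const, smul_eq_mul]
      rw [h5, h6, ← intervalIntegral.integral_sub hintF intervalIntegrable_const]
      have h7 := intervalIntegral.norm_integral_le_of_norm_le_const hptwise
      rw [Real.norm_eq_abs] at h7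
      calc |∫ s in y..x, ((a s (ω s y t))⁻¹ - (a x t)⁻¹)| ≤ ε₂ * |x - y| := h7
        _ = ε₂ * |y - x| := by rw [abs_sub_comm]
    -- combine
    have hfinal : ω ξ y t - ω ξ x t - (y - x) • (-(a x t)⁻¹ * Real.exp (G ξ))
        = (ω ξ y t - v ξ - (ω x y t - t) * Real.exp (G ξ))
          + ((ω x y t - t) - (x - y) * (a x t)⁻¹) * Real.exp (G ξ) := by
      rw [smul_eq_mul, hv_def]
      ring
    rw [Real.norm_eq_abs, Real.norm_eq_abs, hfinal]
    calc |(ω ξ y t - v ξ - (ω x y t - t) * Real.exp (G ξ))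
          + ((ω x y t - t) - (x - y) * (a x t)⁻¹) * Real.exp (G ξ)|
        ≤ |ω ξ y t - v ξ - (ω x y t - t) * Real.exp (G ξ)|
          + |(ω x y t - t) - (x - y) * (a x t)⁻¹| * Real.exp (G ξ) := by
          refine (abs_add_le _ _).trans ?_
          rw [abs_mul, abs_of_pos (Real.exp_pos (G ξ))]
      _ ≤ (ε * c / 2) * |ω x y t - t| + (ε₂ * |y - x|) * Real.exp L := by
          apply add_le_add h2
          apply mul_le_mul hsec (hexpGb ξ hξ) (Real.exp_pos _).le
          positivity
      _ ≤ (ε * c / 2) * (c⁻¹ * |y - x|) + (ε₂ * |y - x|) * Real.exp L := by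
          apply add_le_add_left
          exact mul_le_mul_of_nonneg_left hanchor hε2.le
      _ = ε * |y - x| := by
          rw [hε₂_def]
          field_simp
          ring
  -- conclusion
  have hEeq : Real.exp (G ξ) = Real.exp (∫ η in ξ..x,
      deriv (fun τ => a η τ) (ω η x t) / (a η (ω η x t)) ^ 2) := by
    congr 1
    rw [show (∫ η in ξ..x, deriv (fun τ => a η τ) (ω η x t) / (a η (ω η x t)) ^ 2)
        = -∫ η in x..ξ, deriv (fun τ => a η τ) (ω η x t) / (a η (ω η x t)) ^ 2 from
        intervalIntegral.integral_symm x ξ, ← intervalIntegral.integral_neg]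
    rw [hG_def]
    simp only [hg_def, hD_def, hv_def, neg_div]
  constructor
  · rw [one_div, ← hEeq]
    exact hX
  · intro dt hdt
    rw [hdt.unique hT, one_div]
    exact hX
end

section
/- Let V, W be Banach spaces, 𝒜 : V → W an isomorphism, and ℬ : V → W bounded such that (ℬ𝒜⁻¹)² : W → W is compact. Then 𝒜 + ℬ : V → W is a Fredholm operator of index zero. -/
open Filter Topology Metric Submodule Module

set_option linter.unusedSectionVars false
set_option linter.unnecessarySimpa false
set_option maxHeartbeats 1000000

namespace FredholmAux

variable {W : Type*} [NormedAddCommGroup W] [NormedSpace ℝ W] [CompleteSpace W]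

/-- A bounded sequence has a subsequence whose image under a compact operator converges. -/
lemma compact_subseq {K : W →L[ℝ] W} (hK : IsCompactOperator (⇑K)) {u : ℕ → W} {C : ℝ}
    (hu : ∀ n, ‖u n‖ ≤ C) :
    ∃ z : W, ∃ φ : ℕ → ℕ, StrictMono φ ∧ Tendsto (fun j => K (u (φ j))) atTop (𝓝 z) := by
  obtain ⟨M, hM, hMs⟩ :=
    IsCompactOperator.image_closedBall_subset_compact (f := (K : W →ₗ[ℝ] W)) hK C
  have hmem : ∀ n, K (u n) ∈ M := fun n =>
    hMs ⟨u n, by simpa [Metric.mem_closedBall, dist_eq_norm] using hu n, rfl⟩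
  obtain ⟨z, _, φ, hφ, htend⟩ := hM.tendsto_subseq hmem
  exact ⟨z, φ, hφ, htend⟩

/-- Kernel of `T` is finite dimensional when `T - 1` is compact. -/
lemma ker_finiteDimensional {T : W →L[ℝ] W} (hT : IsCompactOperator (⇑(T - 1))) :
    FiniteDimensional ℝ (LinearMap.ker (T : W →ₗ[ℝ] W)) := by
  have h1T : IsCompactOperator (⇑(1 - T : W →L[ℝ] W)) := by
    have : ⇑(1 - T : W →L[ℝ] W) = -⇑(T - 1 : W →L[ℝ] W) := by
      funext x; simp
    rw [this]; exact hT.neg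
  have hV : ∀ v ∈ LinearMap.ker (T : W →ₗ[ℝ] W), ((1 - T : W →L[ℝ] W) : W →ₗ[ℝ] W) v ∈ LinearMap.ker (T : W →ₗ[ℝ] W) := by
    intro v hv
    have : T v = 0 := hv
    simpa [this] using hv
  have hres : IsCompactOperator
      (⇑(((1 - T : W →L[ℝ] W) : W →ₗ[ℝ] W).restrict hV)) :=
    h1T.restrict hV (ContinuousLinearMap.isClosed_ker T)
  have hid : ⇑(((1 - T : W →L[ℝ] W) : W →ₗ[ℝ] W).restrict hV) = (id : _ → _) := by
    funext x
    have hx : T (x : W) = 0 := x.2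
    ext
    simp [LinearMap.restrict_apply, hx]
  rw [hid] at hres
  obtain ⟨M, hM, hMs⟩ :=
    IsCompactOperator.image_closedBall_subset_compact
      (f := (LinearMap.id : LinearMap.ker (T : W →ₗ[ℝ] W) →ₗ[ℝ] LinearMap.ker (T : W →ₗ[ℝ] W))) hres 1
  have hsub : Metric.closedBall (0 : LinearMap.ker (T : W →ₗ[ℝ] W)) 1 ⊆ M := by
    intro x hx; exact hMs ⟨x, hx, rfl⟩
  have hcomp : IsCompact (Metric.closedBall (0 : LinearMap.ker (T : W →ₗ[ℝ] W)) 1) :=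
    hM.of_isClosed_subset Metric.isClosed_closedBall hsub
  exact FiniteDimensional.of_isCompact_closedBall₀ ℝ one_pos hcomp


/-- Riesz lemma step for a strict inclusion of submodules. -/
lemma riesz_step {F G : Submodule ℝ W} (hFc : IsClosed (F : Set W)) (hFG : F ≤ G)
    (hne : F ≠ G) :
    ∃ x : W, x ∈ G ∧ ‖x‖ = 1 ∧ ∀ y ∈ F, (1 / 2 : ℝ) ≤ ‖x - y‖ := by
  obtain ⟨x0, hx0G, hx0F⟩ := SetLike.exists_of_lt (lt_of_le_of_ne hFG hne)
  set F' : Submodule ℝ G := F.comap G.subtype with hF'def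
  have hF'c : IsClosed (F' : Set G) := hFc.preimage continuous_subtype_val
  have hex : ∃ x : G, x ∉ F' := ⟨⟨x0, hx0G⟩, by simpa [hF'def] using hx0F⟩
  obtain ⟨z, hzF', hz⟩ := riesz_lemma (𝕜 := ℝ) hF'c hex (r := 1 / 2) (by norm_num)
  have hz0 : (z : W) ≠ 0 := by
    intro h
    exact hzF' (by simpa [hF'def, Submodule.mem_comap] using (h ▸ F.zero_mem : (z : W) ∈ F))
  have hzn : ‖(z : W)‖ ≠ 0 := norm_ne_zero_iff.2 hz0
  have hznpos : 0 < ‖(z : W)‖ := norm_pos_iff.2 hz0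
  refine ⟨‖(z : W)‖⁻¹ • (z : W), G.smul_mem _ z.2, ?_, ?_⟩
  · simp [norm_smul, abs_of_nonneg (inv_nonneg.2 (norm_nonneg _)), inv_mul_cancel₀ hzn]
  · intro y hy
    have hyG : ‖(z : W)‖ • y ∈ G := hFG (F.smul_mem _ hy)
    have hmem : (⟨‖(z : W)‖ • y, hyG⟩ : G) ∈ F' := by
      simpa [hF'def, Submodule.mem_comap] using F.smul_mem ‖(z : W)‖ hy
    have h1 := hz _ hmem
    have h2 : ‖z - (⟨‖(z : W)‖ • y, hyG⟩ : G)‖ = ‖(z : W) - ‖(z : W)‖ • y‖ := rfl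
    rw [h2] at h1
    have h3 : ‖(z : W)‖⁻¹ • (z : W) - y = ‖(z : W)‖⁻¹ • ((z : W) - ‖(z : W)‖ • y) := by
      rw [smul_sub, smul_smul, inv_mul_cancel₀ hzn, one_smul]
    have h4 : ‖(z : W)‖⁻¹ * (1 / 2 * ‖(z : W)‖) ≤ ‖(z : W)‖⁻¹ * ‖(z : W) - ‖(z : W)‖ • y‖ := by
      apply mul_le_mul_of_nonneg_left _ (inv_nonneg.2 (norm_nonneg _))
      simpa using h1
    have heq : (1 / 2 : ℝ) = ‖(z : W)‖⁻¹ * (1 / 2 * ‖(z : W)‖) := by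
      field_simp
    rw [h3, norm_smul, Real.norm_eq_abs, abs_of_nonneg (inv_nonneg.2 (norm_nonneg _)), heq]
    exact h4


/-- Range of `T` is closed when `T - 1` is compact. -/
lemma range_isClosed {T : W →L[ℝ] W} (hT : IsCompactOperator (⇑(T - 1))) :
    IsClosed ((LinearMap.range (T : W →ₗ[ℝ] W) : Submodule ℝ W) : Set W) := by
  haveI := ker_finiteDimensional hT
  -- continuous projection onto the kernel
  obtain ⟨f, hf⟩ := Submodule.ClosedComplemented.of_finiteDimensional (LinearMap.ker (T : W →ₗ[ℝ] W))
  set P : W →L[ℝ] W := (LinearMap.ker (T : W →ₗ[ℝ] W)).subtypeL.comp f with hPdef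
  have hP1 : ∀ x, P x ∈ LinearMap.ker (T : W →ₗ[ℝ] W) := fun x => (f x).2
  have hP2 : ∀ x (hx : x ∈ LinearMap.ker (T : W →ₗ[ℝ] W)), P x = x := by
    intro x hx
    have := hf ⟨x, hx⟩
    simp [hPdef, this]
  have hTP : ∀ x, T (P x) = 0 := fun x => hP1 x
  -- bounded below on the complement of the kernel
  have hc : ∃ c > 0, ∀ x : W, P x = 0 → c * ‖x‖ ≤ ‖T x‖ := by
    by_contra hcon
    push_neg at hcon
    have hseq : ∀ n : ℕ, ∃ z : W, ‖z‖ = 1 ∧ P z = 0 ∧ ‖T z‖ < (n + 1 : ℝ)⁻¹ := by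
      intro n
      obtain ⟨x, hPx, hx⟩ := hcon ((n + 1 : ℝ)⁻¹) (by positivity)
      have hx0 : x ≠ 0 := by
        rintro rfl
        simp at hx
      refine ⟨‖x‖⁻¹ • x, ?_, by simp [map_smul, hPx], ?_⟩
      · simp [norm_smul, abs_of_nonneg (inv_nonneg.2 (norm_nonneg _)),
          inv_mul_cancel₀ (norm_ne_zero_iff.2 hx0)]
      · rw [map_smul, norm_smul, Real.norm_eq_abs,
          abs_of_nonneg (inv_nonneg.2 (norm_nonneg _))]
        calc ‖x‖⁻¹ * ‖T x‖ < ‖x‖⁻¹ * ((n + 1 : ℝ)⁻¹ * ‖x‖) := by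
              apply mul_lt_mul_of_pos_left _ (inv_pos.2 (norm_pos_iff.2 hx0))
              linarith [hx]
          _ = (n + 1 : ℝ)⁻¹ := by
              rw [mul_comm ((n + 1 : ℝ)⁻¹) ‖x‖, ← mul_assoc,
                inv_mul_cancel₀ (norm_ne_zero_iff.2 hx0), one_mul]
    choose z hz1 hzP hzT using hseq
    have hTz : Tendsto (fun n => T (z n)) atTop (𝓝 0) := by
      apply squeeze_zero_norm (fun n => (hzT n).le)
      exact tendsto_one_div_add_atTop_nhds_zero_nat.congr (by intro n; rw [one_div])
    obtain ⟨w, φ, hφ, hKz⟩ := compact_subseq hT (u := z) (C := 1) (fun n => (hz1 n).le)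
    have hzconv : Tendsto (fun j => z (φ j)) atTop (𝓝 (-w)) := by
      have : ∀ j, z (φ j) = T (z (φ j)) - (T - 1) (z (φ j)) := by
        intro j; simp
      rw [tendsto_congr this]
      simpa using ((hTz.comp hφ.tendsto_atTop).sub hKz)
    have hnw : ‖(-w : W)‖ = 1 := by
      have hnorm : Tendsto (fun j => ‖z (φ j)‖) atTop (𝓝 ‖(-w : W)‖) := hzconv.norm
      have heq1 : (fun j => ‖z (φ j)‖) = fun _ => (1 : ℝ) := funext fun j => hz1 _
      rw [heq1] at hnorm
      exact tendsto_nhds_unique hnorm tendsto_const_nhds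
    have hTw : T (-w) = 0 := by
      have h1 : Tendsto (fun j => T (z (φ j))) atTop (𝓝 (T (-w))) :=
        (T.continuous.tendsto _).comp hzconv
      exact tendsto_nhds_unique h1 (hTz.comp hφ.tendsto_atTop)
    have hPw : P (-w) = 0 := by
      have h1 : Tendsto (fun j => P (z (φ j))) atTop (𝓝 (P (-w))) :=
        (P.continuous.tendsto _).comp hzconv
      have heq1 : (fun j => P (z (φ j))) = fun _ => (0 : W) := funext fun j => hzP _
      rw [heq1] at h1
      exact tendsto_nhds_unique h1 tendsto_const_nhds
    have : (-w : W) = 0 := by rw [← hP2 (-w) hTw, hPw]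
    rw [this] at hnw
    simp at hnw
  obtain ⟨c, hcpos, hc⟩ := hc
  -- sequential closedness
  apply IsSeqClosed.isClosed
  intro u y hu hy
  choose x hx using hu
  set x' : ℕ → W := fun n => x n - P (x n) with hx'def
  have hTx' : ∀ n, T (x' n) = u n := by
    intro n
    simp only [hx'def, map_sub, hTP, sub_zero]
    exact hx n
  have hPx' : ∀ n, P (x' n) = 0 := by
    intro n
    simp only [hx'def, map_sub, hP2 (P (x n)) (hP1 (x n)), sub_self]
  obtain ⟨Cu, hCu⟩ : ∃ C, ∀ n, ‖u n‖ ≤ C := by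
    obtain ⟨C, hC⟩ := (isBounded_range_of_tendsto u hy).exists_norm_le
    exact ⟨C, fun n => hC _ (Set.mem_range_self n)⟩
  have hx'bdd : ∀ n, ‖x' n‖ ≤ c⁻¹ * Cu := by
    intro n
    have h1 := hc (x' n) (hPx' n)
    rw [hTx' n] at h1
    have h3 : c * ‖x' n‖ ≤ Cu := le_trans h1 (hCu n)
    calc ‖x' n‖ = c⁻¹ * (c * ‖x' n‖) := by
          rw [← mul_assoc, inv_mul_cancel₀ hcpos.ne', one_mul]
      _ ≤ c⁻¹ * Cu := mul_le_mul_of_nonneg_left h3 (inv_nonneg.2 hcpos.le)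
  obtain ⟨w, φ, hφ, hKx⟩ := compact_subseq hT hx'bdd
  have hxconv : Tendsto (fun j => x' (φ j)) atTop (𝓝 (y - w)) := by
    have heq : ∀ j, x' (φ j) = T (x' (φ j)) - (T - 1) (x' (φ j)) := by
      intro j; simp
    rw [tendsto_congr heq]
    have h1 : Tendsto (fun j => T (x' (φ j))) atTop (𝓝 y) := by
      have : ∀ j, T (x' (φ j)) = u (φ j) := fun j => hTx' _
      rw [tendsto_congr this]
      exact hy.comp hφ.tendsto_atTop
    exact h1.sub hKx
  have hTy : T (y - w) = y := by
    have h1 : Tendsto (fun j => T (x' (φ j))) atTop (𝓝 (T (y - w))) :=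
      (T.continuous.tendsto _).comp hxconv
    have h2 : Tendsto (fun j => T (x' (φ j))) atTop (𝓝 y) := by
      have : ∀ j, T (x' (φ j)) = u (φ j) := fun j => hTx' _
      rw [tendsto_congr this]
      exact hy.comp hφ.tendsto_atTop
    exact tendsto_nhds_unique h1 h2
  exact ⟨y - w, hTy⟩


/-- `T^n - 1` is compact whenever `T - 1` is. -/
lemma pow_sub_one_compact {T : W →L[ℝ] W} (hT : IsCompactOperator (⇑(T - 1))) (n : ℕ) :
    IsCompactOperator (⇑(T ^ n - 1)) := by
  induction n with
  | zero =>
      have : (T ^ 0 - 1 : W →L[ℝ] W) = 0 := by simp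
      rw [this]
      exact isCompactOperator_zero
  | succ n ih =>
      have hring : (T ^ (n + 1) - 1 : W →L[ℝ] W) = (T ^ n - 1) * T + (T - 1) := by
        rw [sub_mul, one_mul, ← pow_succ]
        abel
      have h1 : IsCompactOperator (⇑((T ^ n - 1) * T : W →L[ℝ] W)) := by
        have : ⇑((T ^ n - 1) * T : W →L[ℝ] W) = ⇑(T ^ n - 1 : W →L[ℝ] W) ∘ ⇑T := by
          funext x; simp [ContinuousLinearMap.mul_apply]
        rw [this]
        exact ih.comp_clm T
      have h2 : IsCompactOperator
          (⇑((T ^ n - 1) * T : W →L[ℝ] W) + ⇑(T - 1 : W →L[ℝ] W)) := h1.add hT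
      rw [hring]
      have : ⇑((T ^ n - 1) * T + (T - 1) : W →L[ℝ] W)
          = ⇑((T ^ n - 1) * T : W →L[ℝ] W) + ⇑(T - 1 : W →L[ℝ] W) := rfl
      rw [this]
      exact h2

lemma ker_pow_mono (T : W →L[ℝ] W) {a b : ℕ} (h : a ≤ b) :
    LinearMap.ker ((T ^ a : W →L[ℝ] W) : W →ₗ[ℝ] W) ≤ LinearMap.ker ((T ^ b : W →L[ℝ] W) : W →ₗ[ℝ] W) := by
  obtain ⟨c, rfl⟩ := Nat.exists_eq_add_of_le h
  intro x hx
  have hx' : (T ^ a) x = 0 := hx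
  have : (T ^ (a + c)) x = (T ^ c) ((T ^ a) x) := by
    rw [add_comm, pow_add]
    rfl
  simp only [LinearMap.mem_ker, ContinuousLinearMap.coe_coe, this, hx', map_zero]

lemma range_pow_anti (T : W →L[ℝ] W) {a b : ℕ} (h : a ≤ b) :
    LinearMap.range ((T ^ b : W →L[ℝ] W) : W →ₗ[ℝ] W) ≤ LinearMap.range ((T ^ a : W →L[ℝ] W) : W →ₗ[ℝ] W) := by
  obtain ⟨c, rfl⟩ := Nat.exists_eq_add_of_le h
  rintro x ⟨y, rfl⟩
  refine ⟨(T ^ c) y, ?_⟩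
  show (T ^ a) ((T ^ c) y) = (T ^ (a + c)) y
  rw [pow_add]
  rfl

/-- kernels of powers stabilize. -/
lemma ker_pow_stab {T : W →L[ℝ] W} (hT : IsCompactOperator (⇑(T - 1))) :
    ∃ n, ∀ m, n ≤ m → LinearMap.ker ((T ^ m : W →L[ℝ] W) : W →ₗ[ℝ] W) = LinearMap.ker ((T ^ n : W →L[ℝ] W) : W →ₗ[ℝ] W) := by
  -- first, some n with ker T^n = ker T^{n+1}
  have hstep : ∃ n, LinearMap.ker ((T ^ n : W →L[ℝ] W) : W →ₗ[ℝ] W) = LinearMap.ker ((T ^ (n + 1) : W →L[ℝ] W) : W →ₗ[ℝ] W) := by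
    by_contra hcon
    push_neg at hcon
    have hsel : ∀ n : ℕ, ∃ x : W, x ∈ LinearMap.ker ((T ^ (n + 1) : W →L[ℝ] W) : W →ₗ[ℝ] W) ∧ ‖x‖ = 1 ∧
        ∀ y ∈ LinearMap.ker ((T ^ n : W →L[ℝ] W) : W →ₗ[ℝ] W), (1 / 2 : ℝ) ≤ ‖x - y‖ := by
      intro n
      exact riesz_step (ContinuousLinearMap.isClosed_ker (T ^ n)) (ker_pow_mono T (Nat.le_succ n)) (hcon n)
    choose u huK hu1 hud using hsel
    obtain ⟨z, φ, hφ, hKz⟩ := compact_subseq hT (u := u) (C := 1) (fun n => (hu1 n).le)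
    have hCauchy := hKz.cauchySeq
    rw [Metric.cauchySeq_iff] at hCauchy
    obtain ⟨N, hN⟩ := hCauchy (1 / 2) (by norm_num)
    have hdist := hN N le_rfl (N + 1) (Nat.le_succ N)
    set m := φ N with hm
    set n := φ (N + 1) with hn
    have hmn : m < n := hφ (Nat.lt_succ_self N)
    -- key estimate
    have hkey : (1 / 2 : ℝ) ≤ ‖(T - 1) (u n) - (T - 1) (u m)‖ := by
      have hy : T (u n) - T (u m) + u m ∈ LinearMap.ker ((T ^ n : W →L[ℝ] W) : W →ₗ[ℝ] W) := by
        refine Submodule.add_mem _ (Submodule.sub_mem _ ?_ ?_) ?_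
        · -- T (u n) ∈ ker T^n
          have h1 : (T ^ n) (T (u n)) = (T ^ (n + 1)) (u n) := by
            rw [pow_succ]
            rfl
          have h2 : (T ^ (n + 1)) (u n) = 0 := huK n
          show (T ^ n) (T (u n)) = 0
          rw [h1, h2]
        · -- T (u m) ∈ ker T^m ≤ ker T^n
          have h1 : (T ^ m) (T (u m)) = (T ^ (m + 1)) (u m) := by rw [pow_succ]; rfl
          have h3 : T (u m) ∈ LinearMap.ker ((T ^ m : W →L[ℝ] W) : W →ₗ[ℝ] W) := by
            show (T ^ m) (T (u m)) = 0
            rw [h1]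
            exact huK m
          exact ker_pow_mono T hmn.le h3
        · exact ker_pow_mono T (Nat.succ_le_of_lt hmn) (huK m)
      have h3 : (T - 1) (u n) - (T - 1) (u m)
          = -(u n - (T (u n) - T (u m) + u m)) := by
        simp [ContinuousLinearMap.sub_apply]
        abel
      rw [h3, norm_neg]
      exact hud n _ hy
    rw [dist_eq_norm] at hdist
    have : ‖(T - 1) (u n) - (T - 1) (u m)‖ < 1 / 2 := by
      rw [norm_sub_rev]
      simpa [hm, hn] using hdist
    linarith
  obtain ⟨n, hn⟩ := hstep
  -- propagation
  have hprop : ∀ k, LinearMap.ker ((T ^ (n + k) : W →L[ℝ] W) : W →ₗ[ℝ] W) = LinearMap.ker ((T ^ n : W →L[ℝ] W) : W →ₗ[ℝ] W) := by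
    intro k
    induction k with
    | zero => rfl
    | succ k ih =>
        have hcomp : ∀ j : ℕ, LinearMap.ker ((T ^ (j + 1) : W →L[ℝ] W) : W →ₗ[ℝ] W)
            = Submodule.comap (T : W →ₗ[ℝ] W) (LinearMap.ker ((T ^ j : W →L[ℝ] W) : W →ₗ[ℝ] W)) := by
          intro j
          ext x
          simp only [LinearMap.mem_ker, Submodule.mem_comap, ContinuousLinearMap.coe_coe]
          constructor
          · intro hx
            show (T ^ j) (T x) = 0
            rw [show (T ^ j) (T x) = (T ^ (j + 1)) x by rw [pow_succ]; rfl]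
            exact hx
          · intro hx
            show (T ^ (j + 1)) x = 0
            rw [show (T ^ (j + 1)) x = (T ^ j) (T x) by rw [pow_succ]; rfl]
            exact hx
        have : n + (k + 1) = (n + k) + 1 := by ring
        rw [this, hcomp (n + k), ih, ← hcomp n, ← hn]
  refine ⟨n, fun m hm => ?_⟩
  obtain ⟨k, rfl⟩ := Nat.exists_eq_add_of_le hm
  exact hprop k

/-- ranges of powers stabilize. -/
lemma range_pow_stab {T : W →L[ℝ] W} (hT : IsCompactOperator (⇑(T - 1))) :
    ∃ n, ∀ m, n ≤ m → LinearMap.range ((T ^ m : W →L[ℝ] W) : W →ₗ[ℝ] W) = LinearMap.range ((T ^ n : W →L[ℝ] W) : W →ₗ[ℝ] W) := by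
  have hstep : ∃ n, LinearMap.range ((T ^ (n + 1) : W →L[ℝ] W) : W →ₗ[ℝ] W) = LinearMap.range ((T ^ n : W →L[ℝ] W) : W →ₗ[ℝ] W) := by
    by_contra hcon
    push_neg at hcon
    have hsel : ∀ n : ℕ, ∃ x : W, x ∈ LinearMap.range ((T ^ n : W →L[ℝ] W) : W →ₗ[ℝ] W) ∧ ‖x‖ = 1 ∧
        ∀ y ∈ LinearMap.range ((T ^ (n + 1) : W →L[ℝ] W) : W →ₗ[ℝ] W), (1 / 2 : ℝ) ≤ ‖x - y‖ := by
      intro n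
      exact riesz_step (range_isClosed (pow_sub_one_compact hT (n + 1)))
        (range_pow_anti T (Nat.le_succ n)) (hcon n)
    choose u huR hu1 hud using hsel
    obtain ⟨z, φ, hφ, hKz⟩ := compact_subseq hT (u := u) (C := 1) (fun n => (hu1 n).le)
    have hCauchy := hKz.cauchySeq
    rw [Metric.cauchySeq_iff] at hCauchy
    obtain ⟨N, hN⟩ := hCauchy (1 / 2) (by norm_num)
    have hdist := hN N le_rfl (N + 1) (Nat.le_succ N)
    set m := φ N with hm
    set n := φ (N + 1) with hn
    have hmn : m < n := hφ (Nat.lt_succ_self N)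
    have hkey : (1 / 2 : ℝ) ≤ ‖(T - 1) (u m) - (T - 1) (u n)‖ := by
      have hy : T (u m) - T (u n) + u n ∈ LinearMap.range ((T ^ (m + 1) : W →L[ℝ] W) : W →ₗ[ℝ] W) := by
        refine Submodule.add_mem _ (Submodule.sub_mem _ ?_ ?_) ?_
        · -- T (u m) ∈ range T^{m+1}
          obtain ⟨y, hy⟩ := huR m
          refine ⟨y, ?_⟩
          show (T ^ (m + 1)) y = T (u m)
          rw [← hy, pow_succ']
          rfl
        · -- T (u n) ∈ range T^{n+1} ≤ range T^{m+1}
          apply range_pow_anti T (Nat.succ_le_succ hmn.le)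
          obtain ⟨y, hy⟩ := huR n
          refine ⟨y, ?_⟩
          show (T ^ (n + 1)) y = T (u n)
          rw [← hy, pow_succ']
          rfl
        · -- u n ∈ range T^n ≤ range T^{m+1}
          exact range_pow_anti T (Nat.succ_le_of_lt hmn) (huR n)
      have h3 : (T - 1) (u m) - (T - 1) (u n)
          = -(u m - (T (u m) - T (u n) + u n)) := by
        simp [ContinuousLinearMap.sub_apply]
        abel
      rw [h3, norm_neg]
      exact hud m _ hy
    rw [dist_eq_norm] at hdist
    linarith
  obtain ⟨n, hn⟩ := hstep
  have hmap : ∀ j : ℕ, LinearMap.range ((T ^ (j + 1) : W →L[ℝ] W) : W →ₗ[ℝ] W)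
      = Submodule.map (T : W →ₗ[ℝ] W) (LinearMap.range ((T ^ j : W →L[ℝ] W) : W →ₗ[ℝ] W)) := by
    intro j
    ext x
    simp only [LinearMap.mem_range, Submodule.mem_map, ContinuousLinearMap.coe_coe]
    constructor
    · rintro ⟨y, rfl⟩
      exact ⟨(T ^ j) y, ⟨y, rfl⟩, by rw [pow_succ']; rfl⟩
    · rintro ⟨w, ⟨y, rfl⟩, rfl⟩
      exact ⟨y, by rw [pow_succ']; rfl⟩
  have hprop : ∀ k, LinearMap.range ((T ^ (n + k) : W →L[ℝ] W) : W →ₗ[ℝ] W) = LinearMap.range ((T ^ n : W →L[ℝ] W) : W →ₗ[ℝ] W) := by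
    intro k
    induction k with
    | zero => rfl
    | succ k ih =>
        have : n + (k + 1) = (n + k) + 1 := by ring
        rw [this, hmap (n + k), ih, ← hmap n, hn]
  refine ⟨n, fun m hm => ?_⟩
  obtain ⟨k, rfl⟩ := Nat.exists_eq_add_of_le hm
  exact hprop k


/-- Main lemma: if `D²` is compact then `1 + D` is Fredholm of index zero. -/
lemma key (D : W →L[ℝ] W) (hD : IsCompactOperator (⇑(D ∘L D))) :
    FiniteDimensional ℝ (LinearMap.ker ((1 + D : W →L[ℝ] W) : W →ₗ[ℝ] W)) ∧
    IsClosed ((LinearMap.range ((1 + D : W →L[ℝ] W) : W →ₗ[ℝ] W) : Submodule ℝ W) : Set W) ∧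
    FiniteDimensional ℝ (W ⧸ LinearMap.range ((1 + D : W →L[ℝ] W) : W →ₗ[ℝ] W)) ∧
    finrank ℝ (LinearMap.ker ((1 + D : W →L[ℝ] W) : W →ₗ[ℝ] W)) =
      finrank ℝ (W ⧸ LinearMap.range ((1 + D : W →L[ℝ] W) : W →ₗ[ℝ] W)) := by
  set S : W →L[ℝ] W := 1 + D with hSdef
  set T : W →L[ℝ] W := 1 - D * D with hTdef
  have hTK : IsCompactOperator (⇑(T - 1)) := by
    have h1 : ⇑(T - 1) = -⇑(D ∘L D) := by
      funext x
      simp [hTdef, ContinuousLinearMap.mul_apply]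
    rw [h1]; exact hD.neg
  have hTS : T = (1 - D) * S := by rw [hSdef, hTdef]; noncomm_ring
  have hST : T = S * (1 - D) := by rw [hSdef, hTdef]; noncomm_ring
  obtain ⟨n1, hn1⟩ := ker_pow_stab hTK
  obtain ⟨n2, hn2⟩ := range_pow_stab hTK
  set n := n1 + n2 + 1 with hndef
  have hker : ∀ m, n ≤ m → LinearMap.ker ((T ^ m : W →L[ℝ] W) : W →ₗ[ℝ] W) = LinearMap.ker ((T ^ n : W →L[ℝ] W) : W →ₗ[ℝ] W) := by
    intro m hm
    rw [hn1 m (by omega), hn1 n (by omega)]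
  have hrange : ∀ m, n ≤ m → LinearMap.range ((T ^ m : W →L[ℝ] W) : W →ₗ[ℝ] W) = LinearMap.range ((T ^ n : W →L[ℝ] W) : W →ₗ[ℝ] W) := by
    intro m hm
    rw [hn2 m (by omega), hn2 n (by omega)]
  set N := LinearMap.ker ((T ^ n : W →L[ℝ] W) : W →ₗ[ℝ] W) with hNdef
  set R := LinearMap.range ((T ^ n : W →L[ℝ] W) : W →ₗ[ℝ] W) with hRdef
  haveI hNfd : FiniteDimensional ℝ N := ker_finiteDimensional (pow_sub_one_compact hTK n)
  have hRc : IsClosed (R : Set W) := range_isClosed (pow_sub_one_compact hTK n)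
  -- disjointness of N and R
  have hdisj : ∀ x, x ∈ N → x ∈ R → x = 0 := by
    intro x hxN hxR
    obtain ⟨y, rfl⟩ := hxR
    have h1 : y ∈ LinearMap.ker ((T ^ (n + n) : W →L[ℝ] W) : W →ₗ[ℝ] W) := by
      show (T ^ (n + n)) y = 0
      rw [pow_add, ContinuousLinearMap.mul_apply]
      exact hxN
    rw [hker (n + n) (by omega)] at h1
    exact h1
  have hcompl : IsCompl N R := by
    constructor
    · rw [disjoint_iff]
      ext x
      simp only [Submodule.mem_inf, Submodule.mem_bot]
      exact ⟨fun ⟨h1, h2⟩ => hdisj x h1 h2,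
        by rintro rfl; exact ⟨N.zero_mem, R.zero_mem⟩⟩
    · rw [codisjoint_iff, eq_top_iff]
      intro x _
      have hx : (T ^ n) x ∈ LinearMap.range ((T ^ (n + n) : W →L[ℝ] W) : W →ₗ[ℝ] W) := by
        rw [hrange (n + n) (by omega)]
        exact ⟨x, rfl⟩
      obtain ⟨y, hy⟩ := hx
      have hxy : x - (T ^ n) y ∈ N := by
        show (T ^ n) (x - (T ^ n) y) = 0
        rw [map_sub, ← ContinuousLinearMap.mul_apply, ← pow_add]
        exact sub_eq_zero.2 hy.symm
      have hxeq : x = (x - (T ^ n) y) + (T ^ n) y := by abel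
      rw [hxeq]
      exact Submodule.add_mem_sup hxy ⟨y, rfl⟩
  -- commutation
  have hDT : Commute D T := by
    rw [hTdef]
    exact (Commute.one_right D).sub_right ((Commute.refl D).mul_right (Commute.refl D))
  have hDTn : Commute D (T ^ n) := hDT.pow_right n
  have hSTn : Commute S (T ^ n) := by
    have hc : Commute S T := by rw [hSdef]; exact (Commute.one_left T).add_left hDT
    exact hc.pow_right n
  -- invariance
  have hDR : ∀ x ∈ R, D x ∈ R := by
    rintro _ ⟨y, rfl⟩
    refine ⟨D y, ?_⟩
    show ((T ^ n) * D) y = (D * (T ^ n)) y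
    rw [hDTn.eq]
  have hSN : ∀ x ∈ N, S x ∈ N := by
    intro x hx
    show (T ^ n) (S x) = 0
    have h1 : (T ^ n) (S x) = S ((T ^ n) x) := by
      show ((T ^ n) * S) x = (S * (T ^ n)) x
      rw [hSTn.eq]
    rw [h1, show (T ^ n) x = 0 from hx, map_zero]
  have hSR : ∀ x ∈ R, S x ∈ R := by
    intro x hx
    have h1 : S x = x + D x := by
      rw [hSdef]
      simp
    rw [h1]
    exact R.add_mem hx (hDR x hx)
  have h1DR : ∀ x ∈ R, x - D x ∈ R := fun x hx => R.sub_mem hx (hDR x hx)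
  -- kernel of S inside N
  have hkerS_le : LinearMap.ker (S : W →ₗ[ℝ] W) ≤ N := by
    intro x hx
    have hx' : S x = 0 := hx
    have hTx : T x = 0 := by
      rw [hTS]
      show (1 - D) (S x) = 0
      rw [hx', map_zero]
    have h1 : x ∈ LinearMap.ker ((T ^ 1 : W →L[ℝ] W) : W →ₗ[ℝ] W) := by
      show (T ^ 1) x = 0
      rw [pow_one]; exact hTx
    exact ker_pow_mono T (by omega) h1
  -- S is surjective from R to R
  have hSsurjR : ∀ y ∈ R, ∃ x, x ∈ R ∧ S x = y := by
    intro y hy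
    have hy' : y ∈ LinearMap.range ((T ^ (n + 1) : W →L[ℝ] W) : W →ₗ[ℝ] W) := by
      rw [hrange (n + 1) (by omega)]; exact hy
    obtain ⟨w, hw⟩ := hy'
    refine ⟨(T ^ n) w - D ((T ^ n) w), h1DR _ ⟨w, rfl⟩, ?_⟩
    have h1 : S ((T ^ n) w - D ((T ^ n) w)) = T ((T ^ n) w) := by
      have h2 := congrArg (fun (g : W →L[ℝ] W) => g ((T ^ n) w)) hST
      simp only [ContinuousLinearMap.mul_apply, ContinuousLinearMap.sub_apply,
        ContinuousLinearMap.one_apply] at h2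
      exact h2.symm
    rw [h1]
    show (T * T ^ n) w = y
    rw [← pow_succ']
    exact hw
  -- restriction of S to N
  set f : N →ₗ[ℝ] N := ((S : W →ₗ[ℝ] W)).restrict hSN with hfdef
  -- ker S ≃ ker f
  let eker : LinearMap.ker (S : W →ₗ[ℝ] W) →ₗ[ℝ] LinearMap.ker f :=
    { toFun := fun x => ⟨⟨(x : W), hkerS_le x.2⟩, by
        apply Subtype.ext
        show S (x : W) = 0
        exact x.2⟩
      map_add' := fun a b => by apply Subtype.ext; apply Subtype.ext; rfl
      map_smul' := fun c a => by apply Subtype.ext; apply Subtype.ext; rfl }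
  have hbij : Function.Bijective eker := by
    constructor
    · intro a b h
      apply Subtype.ext
      have h1 : ((eker a : N) : W) = ((eker b : N) : W) := by rw [h]
      exact h1
    · rintro ⟨⟨x, hxN⟩, hfx⟩
      have hx : S x = 0 := congrArg Subtype.val hfx
      exact ⟨⟨x, hx⟩, by apply Subtype.ext; apply Subtype.ext; rfl⟩
  have ekerEquiv : LinearMap.ker (S : W →ₗ[ℝ] W) ≃ₗ[ℝ] LinearMap.ker f := LinearEquiv.ofBijective eker hbij
  haveI hkerSfd : FiniteDimensional ℝ (LinearMap.ker (S : W →ₗ[ℝ] W)) := ekerEquiv.symm.finiteDimensional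
  -- range of S
  set SN := Submodule.map (S : W →ₗ[ℝ] W) N with hSNdef
  have hSN_le : SN ≤ N := by
    rintro _ ⟨x, hx, rfl⟩
    exact hSN x hx
  have hmapR : Submodule.map (S : W →ₗ[ℝ] W) R = R := by
    apply le_antisymm
    · rintro _ ⟨x, hx, rfl⟩
      exact hSR x hx
    · intro y hy
      obtain ⟨x, hxR, hSx⟩ := hSsurjR y hy
      exact ⟨x, hxR, hSx⟩
  have hrangeS : LinearMap.range (S : W →ₗ[ℝ] W) = R ⊔ SN := by
    have h1 : LinearMap.range (S : W →ₗ[ℝ] W) = Submodule.map (S : W →ₗ[ℝ] W) ⊤ := by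
      rw [Submodule.map_top]
    rw [h1, ← codisjoint_iff.1 hcompl.codisjoint, Submodule.map_sup, hmapR, hSNdef, sup_comm]
  have hR_le : R ≤ LinearMap.range (S : W →ₗ[ℝ] W) := by rw [hrangeS]; exact le_sup_left
  -- quotient space
  haveI hRc' : IsClosed (R : Set W) := hRc
  have equivQ : (W ⧸ R) ≃ₗ[ℝ] N := R.quotientEquivOfIsCompl N hcompl.symm
  haveI hQfd : FiniteDimensional ℝ (W ⧸ R) := equivQ.symm.finiteDimensional
  set X := Submodule.map R.mkQ (LinearMap.range (S : W →ₗ[ℝ] W)) with hXdef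
  -- closedness of range S
  have hrSclosed : IsClosed ((LinearMap.range (S : W →ₗ[ℝ] W) : Submodule ℝ W) : Set W) := by
    set π : W →L[ℝ] W ⧸ R := LinearMap.mkContinuous R.mkQ 1
      (fun x => by simpa using Submodule.Quotient.norm_mk_le R x) with hπdef
    haveI : FiniteDimensional ℝ X := FiniteDimensional.finiteDimensional_submodule X
    have hXclosed : IsClosed (X : Set (W ⧸ R)) := Submodule.closed_of_finiteDimensional X
    have h1 : Submodule.comap R.mkQ X = R ⊔ LinearMap.range (S : W →ₗ[ℝ] W) := Submodule.comap_map_mkQ R _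
    have h2 : R ⊔ LinearMap.range (S : W →ₗ[ℝ] W) = LinearMap.range (S : W →ₗ[ℝ] W) := sup_eq_right.2 hR_le
    rw [h2] at h1
    have hpre : ((LinearMap.range (S : W →ₗ[ℝ] W) : Submodule ℝ W) : Set W) = ⇑π ⁻¹' (X : Set (W ⧸ R)) := by
      ext x
      constructor
      · intro hx
        have : x ∈ Submodule.comap R.mkQ X := by rw [h1]; exact hx
        exact this
      · intro hx
        have : x ∈ Submodule.comap R.mkQ X := hx
        rw [h1] at this
        exact this
    rw [hpre]
    exact hXclosed.preimage π.continuous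
  -- quotient equivalence
  have equivQQ : ((W ⧸ R) ⧸ X) ≃ₗ[ℝ] W ⧸ (LinearMap.range (S : W →ₗ[ℝ] W)) :=
    Submodule.quotientQuotientEquivQuotient R (LinearMap.range (S : W →ₗ[ℝ] W)) hR_le
  haveI cokerfd : FiniteDimensional ℝ (W ⧸ LinearMap.range (S : W →ₗ[ℝ] W)) := equivQQ.finiteDimensional
  -- finrank computations
  have e1 : finrank ℝ (LinearMap.range f) + finrank ℝ (LinearMap.ker f) = finrank ℝ N :=
    LinearMap.finrank_range_add_finrank_ker f
  have e2 : finrank ℝ ((W ⧸ R) ⧸ X) + finrank ℝ X = finrank ℝ (W ⧸ R) :=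
    Submodule.finrank_quotient_add_finrank X
  have e3 : finrank ℝ (W ⧸ R) = finrank ℝ N := equivQ.finrank_eq
  -- finrank SN = finrank range f
  have hmapf : Submodule.map N.subtype (LinearMap.range f) = SN := by
    rw [← LinearMap.range_comp, LinearMap.subtype_comp_restrict, LinearMap.range_domRestrict]
  have e5 : finrank ℝ SN = finrank ℝ (LinearMap.range f) := by
    rw [← hmapf]
    exact (Submodule.equivMapOfInjective N.subtype N.injective_subtype
      (LinearMap.range f)).finrank_eq.symm
  -- finrank X = finrank SN
  have hX2 : X = Submodule.map R.mkQ SN := by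
    rw [hXdef, hrangeS, Submodule.map_sup]
    have hmapRbot : Submodule.map R.mkQ R = ⊥ := by
      rw [eq_bot_iff]
      rintro _ ⟨r, hr, rfl⟩
      simpa using (Submodule.Quotient.mk_eq_zero R).2 hr
    rw [hmapRbot, bot_sup_eq]
  have e4 : finrank ℝ X = finrank ℝ SN := by
    set g : SN →ₗ[ℝ] W ⧸ R := R.mkQ.comp SN.subtype with hgdef
    have hginj : Function.Injective g := by
      intro a b h
      apply Subtype.ext
      have hsub : R.mkQ ((a : W) - b) = 0 := by
        rw [map_sub]
        rw [sub_eq_zero]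
        exact h
      have hmem : ((a : W) - b) ∈ R := (Submodule.Quotient.mk_eq_zero R).1 hsub
      have := hdisj _ (hSN_le (SN.sub_mem a.2 b.2)) hmem
      exact sub_eq_zero.1 this
    have hgrange : LinearMap.range g = X := by
      rw [hX2, hgdef, LinearMap.range_comp, Submodule.range_subtype]
    rw [← hgrange]
    exact ((LinearEquiv.ofInjective g hginj).finrank_eq).symm
  have e6 : finrank ℝ (LinearMap.ker (S : W →ₗ[ℝ] W)) = finrank ℝ (LinearMap.ker f) := ekerEquiv.finrank_eq
  have e7 : finrank ℝ (W ⧸ LinearMap.range (S : W →ₗ[ℝ] W)) = finrank ℝ ((W ⧸ R) ⧸ X) :=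
    equivQQ.symm.finrank_eq
  refine ⟨hkerSfd, hrSclosed, cokerfd, ?_⟩
  omega


end FredholmAux

/-- Let `𝒜 : V → W` be an isomorphism of Banach spaces and `ℬ : V → W` bounded such
that `(ℬ𝒜⁻¹)² : W → W` is compact. Then `𝒜 + ℬ` is a Fredholm operator of index zero:
finite-dimensional kernel, closed range of finite codimension, and
`dim ker = codim ran`. -/
theorem fredholm_index_zero_of_compact_square
    {V W : Type*} [NormedAddCommGroup V] [NormedSpace ℝ V] [CompleteSpace V]
    [NormedAddCommGroup W] [NormedSpace ℝ W] [CompleteSpace W]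
    (A : V ≃L[ℝ] W) (B : V →L[ℝ] W)
    (hcomp : IsCompactOperator
      ((B ∘L (A.symm : W →L[ℝ] V)) ∘L (B ∘L (A.symm : W →L[ℝ] V)))) :
    FiniteDimensional ℝ (LinearMap.ker (((A : V →L[ℝ] W) + B : V →L[ℝ] W) : V →ₗ[ℝ] W)) ∧
    IsClosed (LinearMap.range (((A : V →L[ℝ] W) + B : V →L[ℝ] W) : V →ₗ[ℝ] W) : Set W) ∧
    FiniteDimensional ℝ (W ⧸ LinearMap.range (((A : V →L[ℝ] W) + B : V →L[ℝ] W) : V →ₗ[ℝ] W)) ∧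
    Module.finrank ℝ (LinearMap.ker (((A : V →L[ℝ] W) + B : V →L[ℝ] W) : V →ₗ[ℝ] W)) =
      Module.finrank ℝ (W ⧸ LinearMap.range (((A : V →L[ℝ] W) + B : V →L[ℝ] W) : V →ₗ[ℝ] W)) := by
  set D : W →L[ℝ] W := B ∘L (A.symm : W →L[ℝ] V) with hDdef
  obtain ⟨h1, h2, h3, h4⟩ := FredholmAux.key D hcomp
  have hAB : (A : V →L[ℝ] W) + B = (1 + D) ∘L (A : V →L[ℝ] W) := by
    ext x
    simp [hDdef]
  have hrange_eq : LinearMap.range (((A : V →L[ℝ] W) + B : V →L[ℝ] W) : V →ₗ[ℝ] W)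
      = LinearMap.range ((1 + D : W →L[ℝ] W) : W →ₗ[ℝ] W) := by
    rw [hAB]
    ext y
    constructor
    · rintro ⟨x, rfl⟩
      exact ⟨A x, rfl⟩
    · rintro ⟨w, rfl⟩
      exact ⟨A.symm w, by simp⟩
  have hker_map : Submodule.map (A.toLinearEquiv : V →ₗ[ℝ] W)
      (LinearMap.ker (((A : V →L[ℝ] W) + B : V →L[ℝ] W) : V →ₗ[ℝ] W)) = LinearMap.ker ((1 + D : W →L[ℝ] W) : W →ₗ[ℝ] W) := by
    ext y
    constructor
    · rintro ⟨x, hx, rfl⟩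
      have hx' : ((A : V →L[ℝ] W) + B) x = 0 := hx
      rw [hAB] at hx'
      exact hx'
    · intro hy
      refine ⟨A.symm y, ?_, by simp⟩
      show ((A : V →L[ℝ] W) + B) (A.symm y) = 0
      rw [hAB]
      show (1 + D) (A (A.symm y)) = 0
      rw [A.apply_symm_apply]
      exact hy
  have ekere : LinearMap.ker (((A : V →L[ℝ] W) + B : V →L[ℝ] W) : V →ₗ[ℝ] W) ≃ₗ[ℝ] LinearMap.ker ((1 + D : W →L[ℝ] W) : W →ₗ[ℝ] W) :=
    (A.toLinearEquiv.submoduleMap (LinearMap.ker (((A : V →L[ℝ] W) + B : V →L[ℝ] W) : V →ₗ[ℝ] W))).trans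
      (LinearEquiv.ofEq _ _ hker_map)
  refine ⟨ekere.symm.finiteDimensional, ?_, ?_, ?_⟩
  · rw [hrange_eq]
    exact h2
  · rw [hrange_eq]
    exact h3
  · rw [hrange_eq, ekere.finrank_eq]
    exact h4
end
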